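/- There is an absolute constant C such that for all n, the dispersion of the n-th Fibonacci point set F_n satisfies disp(F_n) ≤ C/b_n. -/

import Mathlib

open MeasureTheory Real

noncomputable section

/-- The univariate smooth hat function `h^r_u`. -/
def hFun (u : ℝ) : ℕ → ℝ → ℝ
  | 0 => fun _ => 0
  | 1 => fun x => Set.indicator (Set.Ico (-(u / 2)) (u / 2)) (fun _ => (1 : ℝ)) x
  | (r + 2) => fun x => ∫ y : ℝ, hFun u (r + 1) (x - y) * hFun u 1 y

/-- The multivariate function `h^r_B` for the box with center `z` and parameter vector `u`. -/
def hBox (d r : ℕ) (z u : Fin d → ℝ) (x : Fin d → ℝ) : ℝ :=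
  ∏ j, hFun (u j) r (x j - z j)

/-- The box `B = ∏_j [z_j - r u_j/2, z_j + r u_j/2)`. -/
def boxSet (d r : ℕ) (z u : Fin d → ℝ) : Set (Fin d → ℝ) :=
  Set.univ.pi fun j => Set.Ico (z j - r * u j / 2) (z j + r * u j / 2)

/-- The unit cube `[0,1)^d`. -/
def unitCube (d : ℕ) : Set (Fin d → ℝ) :=
  Set.univ.pi fun _ => Set.Ico (0 : ℝ) 1

/-- Periodization of a multivariate function over `ℤ^d`. -/
def periodize (d : ℕ) (f : (Fin d → ℝ) → ℝ) (x : Fin d → ℝ) : ℝ :=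
  ∑' m : Fin d → ℤ, f fun j => (m j : ℝ) + x j

/-- The error of the equal-weight cubature with nodes `ξ 1, …, ξ m` applied to the
periodization of `h^r_B` shifted by `z`. -/
def errFun (d r m : ℕ) (ξ : ℕ → Fin d → ℝ) (zB u : Fin d → ℝ) (z : Fin d → ℝ) : ℝ :=
  (∫ x in unitCube d, periodize d (hBox d r zB u) fun j => x j - z j) -
    (m : ℝ)⁻¹ * ∑ μ ∈ Finset.Icc 1 m, periodize d (hBox d r zB u) fun j => ξ μ j - z j

/-- The hyperbolic cross `Γ(N,d)`. -/
def hyperbolicCross (d : ℕ) (N : ℝ) : Set (Fin d → ℤ) :=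
  {k | (∏ j, max |(k j : ℝ)| 1) ≤ N}

/-- The exponential `e^{2πi(k,x)}`. -/
def expFun (d : ℕ) (k : Fin d → ℤ) (x : Fin d → ℝ) : ℂ :=
  Complex.exp (2 * Real.pi * Complex.I * ∑ j, (k j : ℂ) * (x j : ℂ))

/-- The space `T(N,d)` of trigonometric polynomials with frequencies in `Γ(N,d)`. -/
def TSpace (d : ℕ) (N : ℝ) : Submodule ℂ ((Fin d → ℝ) → ℂ) :=
  Submodule.span ℂ (expFun d '' hyperbolicCross d N)

/-- The nodes `y^μ` of the Korobov cubature formula `P_m(·,a)`. -/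
def korobovNode (d m : ℕ) (a : Fin d → ℤ) (μ : ℕ) : Fin d → ℝ :=
  fun j => Int.fract ((μ : ℝ) * (a j : ℝ) / (m : ℝ))

/-- The Korobov cubature formula `P_m(f,a)`. -/
def korobovSum (d m : ℕ) (a : Fin d → ℤ) (f : (Fin d → ℝ) → ℂ) : ℂ :=
  (m : ℂ)⁻¹ * ∑ μ ∈ Finset.Icc 1 m, f (korobovNode d m a μ)

/-- Exactness of the Korobov cubature formula on `T(N,d)`. -/
def IsExact (d m : ℕ) (a : Fin d → ℤ) (N : ℝ) : Prop :=
  ∀ f ∈ TSpace d N, korobovSum d m a f = ∫ x in unitCube d, f x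

/-- The Fibonacci numbers with `b 0 = b 1 = 1`. -/
def fibb : ℕ → ℕ
  | 0 => 1
  | 1 => 1
  | (n + 2) => fibb (n + 1) + fibb n

/-- The points of the Fibonacci point set `𝓕_n`. -/
def fibNode (n : ℕ) (μ : ℕ) : Fin 2 → ℝ :=
  ![(μ : ℝ) / (fibb n : ℝ), Int.fract ((μ : ℝ) * (fibb (n - 1) : ℝ) / (fibb n : ℝ))]


lemma fibb_pos : ∀ n, 0 < fibb n
  | 0 => one_pos
  | 1 => one_pos
  | (n+2) => by simp [fibb]; exact Or.inl (fibb_pos (n+1))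

lemma fibb_le_succ : ∀ n, fibb n ≤ fibb (n+1)
  | 0 => le_refl 1
  | (n+1) => by
      show fibb (n+1) ≤ fibb (n+1) + fibb n
      exact Nat.le_add_right _ _

lemma fibb_mono : Monotone fibb := monotone_nat_of_le_succ fibb_le_succ

lemma fibb_succ_le (n : ℕ) : fibb (n+1) ≤ 2 * fibb n := by
  cases n with
  | zero => simp [fibb]
  | succ k =>
      have h := fibb_le_succ k
      show fibb (k+1) + fibb k ≤ 2 * fibb (k+1)
      omega

lemma fibb_add : ∀ p q, fibb (p+q+2) = fibb (p+1) * fibb (q+1) + fibb p * fibb q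
  | 0, q => by simp [fibb]
  | 1, q => by
      have : 1 + q + 2 = (q+1) + 2 := by omega
      rw [this]
      show fibb (q+2) + fibb (q+1) = fibb 2 * fibb (q+1) + fibb 1 * fibb q
      show fibb (q+1) + fibb q + fibb (q+1) = _
      simp [fibb]; ring
  | (p+2), q => by
      have h1 := fibb_add (p+1) q
      have h2 := fibb_add p q
      have e : p + 2 + q + 2 = (p + q + 2) + 2 := by omega
      rw [e]
      show fibb (p+q+2+1) + fibb (p+q+2) = _
      have e2 : p + q + 2 + 1 = (p+1) + q + 2 := by omega
      rw [e2, h1, h2]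
      show _ = (fibb (p+2) + fibb (p+1)) * fibb (q+1) + (fibb (p+1) + fibb p) * fibb q
      ring

lemma fib_cong : ∀ j i : ℕ,
    Int.ModEq (fibb (j + i + 1) : ℤ) ((fibb j : ℤ) * (fibb (j + i) : ℤ)) ((-1)^j * (fibb i : ℤ))
  | 0, i => by simp [fibb]
  | 1, i => by
      have e : (1:ℕ) + i = i + 1 := by omega
      rw [e]
      have hf : (fibb (i+1+1) : ℤ) = fibb (i+1) + fibb i := by
        exact_mod_cast congrArg (Nat.cast (R := ℤ)) rfl
      refine Int.modEq_iff_dvd.mpr ⟨-1, ?_⟩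
      simp [fibb]
      push_cast [hf]
      ring
  | (j+2), i => by
      have h1 := fib_cong (j+1) (i+1)
      have h2 := fib_cong j (i+2)
      have e1 : j + 1 + (i + 1) = j + i + 2 := by omega
      have e2 : j + (i + 2) = j + i + 2 := by omega
      rw [e1] at h1
      rw [e2] at h2
      have e5 : j + 2 + i = j + i + 2 := by omega
      rw [e5]
      have hsum := Int.ModEq.add h1 h2
      have lhs_eq : ((fibb (j+1) : ℤ) * fibb (j+i+2)) + ((fibb j : ℤ) * fibb (j+i+2))
          = (fibb (j+2) : ℤ) * fibb (j+i+2) := by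
        have : (fibb (j+2) : ℤ) = fibb (j+1) + fibb j := by
          exact_mod_cast congrArg (Nat.cast (R := ℤ)) rfl
        rw [this]; ring
      have rhs_eq : ((-1:ℤ))^(j+1) * fibb (i+1) + ((-1:ℤ))^j * fibb (i+2)
          = ((-1:ℤ))^(j+2) * fibb i := by
        have : (fibb (i+2) : ℤ) = fibb (i+1) + fibb i := by
          exact_mod_cast congrArg (Nat.cast (R := ℤ)) rfl
        rw [this]; ring
      rw [lhs_eq, rhs_eq] at hsum
      exact hsum

lemma key (j i : ℕ) (c1 c2 : ℝ) :
    ∃ u v : ℤ, Int.ModEq (fibb (j + i + 2) : ℤ) (u * (fibb (j + i + 1) : ℤ)) v ∧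
      |(u:ℝ) - c1| ≤ (fibb (j+2) : ℝ)/2 ∧ |(v:ℝ) - c2| ≤ (fibb (i+2) : ℝ)/2 := by
  set A1 : ℝ := (fibb j : ℝ) with hA1
  set A2 : ℝ := (fibb (j+1) : ℝ) with hA2
  set D1 : ℝ := (-1:ℝ)^j * (fibb (i+1) : ℝ) with hD1
  set D2 : ℝ := (-1:ℝ)^(j+1) * (fibb i : ℝ) with hD2
  have hdet : A1 * D2 - A2 * D1 = (-1:ℝ)^(j+1) * (fibb (j+i+2) : ℝ) := by
    have hf : (fibb (j+i+2) : ℝ) = (fibb (j+1) : ℝ) * (fibb (i+1) : ℝ) + (fibb j : ℝ) * (fibb i : ℝ) := by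
      exact_mod_cast congrArg (Nat.cast (R := ℝ)) (fibb_add j i)
    rw [hA1, hA2, hD1, hD2, hf]; ring
  have hm : (0:ℝ) < (fibb (j+i+2) : ℝ) := by exact_mod_cast fibb_pos _
  have hdetne : A1 * D2 - A2 * D1 ≠ 0 := by
    rw [hdet]
    have : ((-1:ℝ)^(j+1)) ≠ 0 := by positivity
    positivity
  set det := A1 * D2 - A2 * D1 with hd
  set x : ℝ := (c1 * D2 - c2 * A2) / det with hx
  set y : ℝ := (c2 * A1 - c1 * D1) / det with hy
  have hsol1 : x * A1 + y * A2 = c1 := by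
    rw [hx, hy]; field_simp; ring
  have hsol2 : x * D1 + y * D2 = c2 := by
    rw [hx, hy]; field_simp; ring
  set p : ℤ := round x
  set q : ℤ := round y
  refine ⟨p * (fibb j : ℤ) + q * (fibb (j+1) : ℤ),
          p * ((-1:ℤ)^j * (fibb (i+1) : ℤ)) + q * ((-1:ℤ)^(j+1) * (fibb i : ℤ)), ?_, ?_, ?_⟩
  · have h1 := (fib_cong j (i+1)).mul_left p
    have h2 := (fib_cong (j+1) i).mul_left q
    have e1 : j + (i + 1) = j + i + 1 := by omega
    have e2 : j + 1 + i = j + i + 1 := by omega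
    rw [e1] at h1
    rw [e2] at h2
    have := Int.ModEq.add h1 h2
    calc (p * (fibb j : ℤ) + q * (fibb (j+1) : ℤ)) * (fibb (j+i+1) : ℤ)
        = p * ((fibb j : ℤ) * (fibb (j+i+1):ℤ)) + q * ((fibb (j+1) : ℤ) * (fibb (j+i+1):ℤ)) := by ring
      _ ≡ p * ((-1)^j * (fibb (i+1) : ℤ)) + q * ((-1)^(j+1) * (fibb i : ℤ)) [ZMOD (fibb (j+i+2) : ℤ)] := this
  · have hp : |(p:ℝ) - x| ≤ 1/2 := by
      have := abs_sub_round x; rw [abs_sub_comm] at this; exact this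
    have hq : |(q:ℝ) - y| ≤ 1/2 := by
      have := abs_sub_round y; rw [abs_sub_comm] at this; exact this
    have he : ((p * (fibb j : ℤ) + q * (fibb (j+1) : ℤ) : ℤ) : ℝ) - c1
        = ((p:ℝ) - x) * A1 + ((q:ℝ) - y) * A2 := by
      push_cast
      rw [← hsol1, hA1, hA2]
      ring
    rw [he]
    have hA1n : (0:ℝ) ≤ A1 := by rw [hA1]; positivity
    have hA2n : (0:ℝ) ≤ A2 := by rw [hA2]; positivity
    have hfj : (fibb (j+2) : ℝ) = A1 + A2 := by
      have h : fibb (j+2) = fibb (j+1) + fibb j := rfl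
      rw [hA1, hA2]
      push_cast [h]
      ring
    calc |((p:ℝ) - x) * A1 + ((q:ℝ) - y) * A2|
        ≤ |((p:ℝ) - x) * A1| + |((q:ℝ) - y) * A2| := abs_add_le _ _
      _ = |(p:ℝ) - x| * A1 + |(q:ℝ) - y| * A2 := by rw [abs_mul, abs_mul, abs_of_nonneg hA1n, abs_of_nonneg hA2n]
      _ ≤ (1/2) * A1 + (1/2) * A2 := by
          gcongr
      _ = (fibb (j+2) : ℝ)/2 := by rw [hfj]; ring
  · have hp : |(p:ℝ) - x| ≤ 1/2 := by
      have := abs_sub_round x; rw [abs_sub_comm] at this; exact this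
    have hq : |(q:ℝ) - y| ≤ 1/2 := by
      have := abs_sub_round y; rw [abs_sub_comm] at this; exact this
    have he : ((p * ((-1:ℤ)^j * (fibb (i+1) : ℤ)) + q * ((-1:ℤ)^(j+1) * (fibb i : ℤ)) : ℤ) : ℝ) - c2
        = ((p:ℝ) - x) * D1 + ((q:ℝ) - y) * D2 := by
      push_cast
      rw [← hsol2, hD1, hD2]
      ring
    rw [he]
    have hD1a : |D1| = (fibb (i+1) : ℝ) := by
      rw [hD1, abs_mul, abs_pow, abs_neg, abs_one, one_pow, one_mul, abs_of_nonneg]; positivity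
    have hD2a : |D2| = (fibb i : ℝ) := by
      rw [hD2, abs_mul, abs_pow, abs_neg, abs_one, one_pow, one_mul, abs_of_nonneg]; positivity
    have hfi : (fibb (i+2) : ℝ) = (fibb (i+1) : ℝ) + (fibb i : ℝ) := by
      exact_mod_cast congrArg (Nat.cast (R := ℝ)) (show fibb (i+2) = fibb (i+1) + fibb i from rfl)
    calc |((p:ℝ) - x) * D1 + ((q:ℝ) - y) * D2|
        ≤ |((p:ℝ) - x) * D1| + |((q:ℝ) - y) * D2| := abs_add_le _ _
      _ = |(p:ℝ) - x| * |D1| + |(q:ℝ) - y| * |D2| := by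
          rw [abs_mul ((p:ℝ) - x) D1, abs_mul ((q:ℝ) - y) D2]
      _ ≤ (1/2) * |D1| + (1/2) * |D2| := by gcongr
      _ = (fibb (i+2) : ℝ)/2 := by rw [hD1a, hD2a, hfi]; ring

set_option maxHeartbeats 1000000 in
/-- Theorem FT.1: the dispersion of the Fibonacci point set is at most `C/b_n`. -/
theorem fibonacci_dispersion :
    ∃ C : ℝ, 0 < C ∧
      ∀ n : ℕ, ∀ x y : Fin 2 → ℝ, (∀ j, 0 ≤ x j) → (∀ j, x j < y j) → (∀ j, y j ≤ 1) →
        (∀ μ ∈ Finset.Icc 1 (fibb n), ∃ j, fibNode n μ j ∉ Set.Ico (x j) (y j)) →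
        (y 0 - x 0) * (y 1 - x 1) ≤ C / fibb n := by
  classical
  refine ⟨9, by norm_num, ?_⟩
  intro n x y hx hxy hy hemp
  have hmpos : 0 < fibb n := fibb_pos n
  have hmR : (0:ℝ) < (fibb n : ℝ) := by exact_mod_cast hmpos
  have hw1 : 0 < y 0 - x 0 := sub_pos.mpr (hxy 0)
  have hw2 : 0 < y 1 - x 1 := sub_pos.mpr (hxy 1)
  have hw1le : y 0 - x 0 ≤ 1 := by have := hx 0; have := hy 0; linarith
  have hw2le : y 1 - x 1 ≤ 1 := by have := hx 1; have := hy 1; linarith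
  rw [le_div_iff₀ hmR]
  by_cases hsm : (fibb n : ℝ) ≤ 9
  · have h11 : (y 0 - x 0) * (y 1 - x 1) ≤ 1 := by nlinarith
    nlinarith [mul_le_mul_of_nonneg_right h11 hmR.le]
  push_neg at hsm
  by_cases hw1m : (y 0 - x 0) * (fibb n : ℝ) ≤ 3
  · nlinarith [mul_le_mul_of_nonneg_right hw1m hw2.le]
  push_neg at hw1m
  have hn2 : 2 ≤ n := by
    by_contra hc
    push_neg at hc
    interval_cases n <;> simp [fibb] at hsm <;> norm_num at hsm
  set m : ℝ := (fibb n : ℝ) with hmdef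
  set S : ℝ := (y 0 - x 0) * m - 1 with hSdef
  have hS2 : 2 < S := by simp only [hSdef]; linarith
  set P : ℕ → Prop := fun j => (fibb (j+2) : ℝ) < S with hPdef
  have hP0 : P 0 := by
    have : (fibb 2 : ℝ) = 2 := by norm_num [fibb]
    simpa [hPdef, this] using hS2
  set J := Nat.findGreatest P (n-2) with hJdef
  have hJle : J ≤ n - 2 := Nat.findGreatest_le _
  have hPJ : P J := Nat.findGreatest_spec (Nat.zero_le _) hP0
  set i := n - 2 - J with hidef
  have hin : J + i + 2 = n := by omega
  have hSup : S ≤ (fibb (J+3) : ℝ) := by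
    by_cases hJ : J = n - 2
    · have h1 : n + 1 ≤ J + 3 := by omega
      have h2 : (fibb n : ℝ) ≤ (fibb (J+3) : ℝ) := by
        exact_mod_cast fibb_mono (by omega : n ≤ J + 3)
      have h3 : S ≤ m - 1 := by
        simp only [hSdef]
        nlinarith
      simp only [hmdef] at h3
      linarith
    · have hlt : J + 1 ≤ n - 2 := by omega
      have hng : ¬ P (J+1) := Nat.findGreatest_is_greatest (by omega) hlt
      simp only [hPdef, not_lt] at hng
      have : fibb (J+3) = fibb (J+2) + fibb (J+1) := rfl
      have hmo : (fibb (J+3):ℝ) ≥ (fibb (J+1+2):ℝ) := by norm_num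
      linarith
  have hw2m : (y 1 - x 1) * m ≤ (fibb (i+2) : ℝ) := by
    by_contra hcon
    push_neg at hcon
    obtain ⟨u, v, hmod, hub, hvb⟩ :=
      key J i ((x 0 * m + 1 + y 0 * m)/2) ((x 1 * m + y 1 * m)/2)
    have ei2 : J + i + 2 = n := hin
    have ei1 : J + i + 1 = n - 1 := by omega
    rw [ei1, ei2] at hmod
    -- bounds on u
    have hfJ : (fibb (J+2) : ℝ) < S := hPJ
    simp only [hSdef] at hfJ
    obtain ⟨hub1, hub2⟩ := abs_le.mp hub
    obtain ⟨hvb1, hvb2⟩ := abs_le.mp hvb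
    have hu1 : x 0 * m + 1 < (u:ℝ) := by linarith
    have hu2 : (u:ℝ) < y 0 * m := by linarith
    have hv1 : x 1 * m < (v:ℝ) := by linarith
    have hv2 : (v:ℝ) < y 1 * m := by linarith
    -- u is a positive integer
    have hu0 : 0 < u := by
      have hx0 : 0 ≤ x 0 := hx 0
      have : (0:ℝ) < (u:ℝ) := by nlinarith
      exact_mod_cast this
    set μ : ℕ := u.toNat with hμdef
    have hμu : ((μ:ℕ):ℝ) = (u:ℝ) := by
      rw [hμdef]
      exact_mod_cast congrArg (fun z : ℤ => (z:ℝ)) (Int.toNat_of_nonneg hu0.le)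
    have hμmem : μ ∈ Finset.Icc 1 (fibb n) := by
      rw [Finset.mem_Icc]
      constructor
      · omega
      · have hyle : y 0 ≤ 1 := hy 0
        have h' : (u:ℝ) < m := by nlinarith
        have h'' : (u:ℤ) < (fibb n : ℤ) := by
          exact_mod_cast show (u:ℝ) < ((fibb n : ℕ):ℝ) from h'
        omega
    obtain ⟨jj, hjj⟩ := hemp μ hμmem
    -- v bounds give 0 ≤ v < m
    have hv0 : (0:ℝ) ≤ (v:ℝ) := by
      have := hx 1
      nlinarith
    have hvm : (v:ℝ) < m := by
      have := hy 1
      nlinarith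
    -- compute the nodes
    have hnode0 : fibNode n μ 0 = (u:ℝ)/m := by
      simp only [fibNode, Matrix.cons_val_zero, hμu, hmdef]
    have hnode1 : fibNode n μ 1 = (v:ℝ)/m := by
      obtain ⟨k, hk⟩ := (Int.ModEq.dvd hmod : ((fibb n : ℤ)) ∣ (v - u * (fibb (n-1) : ℤ)))
      have harg : (μ:ℝ) * (fibb (n-1) : ℝ) / m = (v:ℝ)/m - (k:ℝ) := by
        have hkr : ((v:ℝ) - (u:ℝ) * (fibb (n-1):ℝ)) = ((fibb n : ℕ):ℝ) * (k:ℝ) := by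
          exact_mod_cast congrArg (fun z : ℤ => (z:ℝ)) hk
        rw [hμu, hmdef]
        have hne : ((fibb n : ℕ):ℝ) ≠ 0 := by positivity
        field_simp
        linarith [hkr]
      simp only [fibNode, Matrix.cons_val_one, Matrix.head_cons]
      rw [hmdef] at harg ⊢
      rw [harg, Int.fract_sub_intCast, Int.fract_eq_self.mpr]
      constructor
      · exact ⟨div_nonneg hv0 hmR.le, (div_lt_one hmR).mpr hvm⟩
    apply hjj
    fin_cases jj
    · show fibNode n μ 0 ∈ Set.Ico (x 0) (y 0)
      rw [hnode0]
      refine Set.mem_Ico.mpr ⟨?_, ?_⟩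
      · have hx0 : 0 ≤ x 0 := hx 0
        rw [le_div_iff₀ hmR]
        linarith
      · rw [div_lt_iff₀ hmR]
        linarith
    · show fibNode n μ 1 ∈ Set.Ico (x 1) (y 1)
      rw [hnode1]
      refine Set.mem_Ico.mpr ⟨?_, ?_⟩
      · rw [le_div_iff₀ hmR]
        linarith
      · rw [div_lt_iff₀ hmR]
        linarith
  -- final arithmetic
  have hprod : (fibb (J+3) : ℝ) * (fibb (i+2) : ℝ) ≤ (fibb (n+3) : ℝ) := by
    have h1 := fibb_add (J+2) (i+1)
    have e : J + 2 + (i+1) + 2 = n + 3 := by omega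
    rw [e] at h1
    have : fibb (J+2+1) * fibb (i+1+1) ≤ fibb (n+3) := by omega
    exact_mod_cast this
  have h8 : (fibb (n+3) : ℝ) ≤ 8 * m := by
    have h1 := fibb_succ_le (n+2)
    have h2 := fibb_succ_le (n+1)
    have h3 := fibb_succ_le n
    have e1 : fibb (n+1+1) = fibb (n+2) := rfl
    have e2 : fibb (n+2+1) = fibb (n+3) := rfl
    have e3 : fibb (n+0+1) = fibb (n+1) := rfl
    have : fibb (n+3) ≤ 8 * fibb n := by omega
    simp only [hmdef]
    exact_mod_cast this
  have hSpos : (0:ℝ) < S := by linarith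
  have hw2mpos : (0:ℝ) < (y 1 - x 1) * m := by positivity
  have hmul : S * ((y 1 - x 1) * m) ≤ (fibb (J+3) : ℝ) * (fibb (i+2) : ℝ) :=
    mul_le_mul hSup hw2m hw2mpos.le (by positivity)
  have hfin : S * ((y 1 - x 1) * m) ≤ 8 * m := le_trans hmul (le_trans hprod h8)
  have hSw2 : S * (y 1 - x 1) ≤ 8 := by
    have := le_of_mul_le_mul_right (by linarith [hfin] : (S * (y 1 - x 1)) * m ≤ 8 * m) hmR
    linarith
  simp only [hSdef] at hSw2
  nlinarith

end
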